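/- Let m > 1 be an integer, and index the elements of F(B(2m),m) in ascending order as f₀ < f₁ < f₂ < ⋯ with f₀ = 0/1. Let s and t be the indices with f_s = 1/2 and f_t = 2/3. Then for every integer v with 0 ≤ v ≤ t−s, the numerators of f_{t+v} and f_{t−v} (in lowest terms) are equal, and den(f_{t+v}) + den(f_{t−v}) = 3·num(f_{t+v}), where num and den denote numerator and denominator in lowest terms. -/

import Mathlib

/-- The Farey sequence `F_n` of order `n`, viewed as the set of rationals `q`
with `0 ≤ q ≤ 1` whose lowest-terms denominator is at most `n`. -/
def Farey (n : ℕ) : Set ℚ :=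
  {q : ℚ | 0 ≤ q ∧ q ≤ 1 ∧ q.den ≤ n}

/-- The Farey subsequence `F(B(n),m)`: fractions `h/k ∈ F_n` in lowest terms
with `h ≤ m` and `k - h ≤ n - m`. -/
def FareyB (n m : ℕ) : Set ℚ :=
  {q : ℚ | 0 ≤ q ∧ q ≤ 1 ∧ q.den ≤ n ∧ q.num ≤ (m : ℤ) ∧
    (q.den : ℤ) - q.num ≤ (n : ℤ) - (m : ℤ)}

/-- `f'` is the predecessor of `f` in the set `S` of rationals. -/
def IsPredIn (S : Set ℚ) (f' f : ℚ) : Prop :=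
  f' ∈ S ∧ f ∈ S ∧ f' < f ∧ ∀ g ∈ S, ¬(f' < g ∧ g < f)

/-- `f'` is the successor of `f` in the set `S` of rationals. -/
def IsSuccIn (S : Set ℚ) (f f' : ℚ) : Prop :=
  f ∈ S ∧ f' ∈ S ∧ f < f' ∧ ∀ g ∈ S, ¬(f < g ∧ g < f')

/-- The reflection `q ↦ q/(3q-1)`, an order-reversing involution of `[1/2, 1]`
fixing `2/3`, sending `h/k` to `h/(3h-k)`. -/
def fareySig (q : ℚ) : ℚ := q / (3 * q - 1)

lemma half_le_nd {q : ℚ} (h : 1/2 ≤ q) : (q.den : ℤ) ≤ 2 * q.num := by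
  have hd : (0:ℚ) < (q.den:ℚ) := by exact_mod_cast q.pos
  have h2 : (1:ℚ)/2 ≤ (q.num:ℚ)/(q.den:ℚ) := by rw [Rat.num_div_den]; exact h
  rw [div_le_div_iff₀ (by norm_num) hd] at h2
  have : (q.den:ℚ) ≤ 2 * (q.num:ℚ) := by linarith
  exact_mod_cast this

lemma le_one_nd {q : ℚ} (h : q ≤ 1) : q.num ≤ (q.den : ℤ) := by
  have hd : (0:ℚ) < (q.den:ℚ) := by exact_mod_cast q.pos
  have h2 : (q.num:ℚ)/(q.den:ℚ) ≤ 1 := by rw [Rat.num_div_den]; exact h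
  rw [div_le_one hd] at h2
  exact_mod_cast h2

lemma fareySig_spec {q : ℚ} (h1 : 1/2 ≤ q) (h2 : q ≤ 1) :
    (fareySig q).num = q.num ∧ ((fareySig q).den : ℤ) = 3 * q.num - q.den := by
  have hd : (0:ℤ) < (q.den:ℤ) := by exact_mod_cast q.pos
  have hk : (q.den:ℤ) ≤ 2 * q.num := half_le_nd h1
  have ha : q.num ≤ (q.den:ℤ) := le_one_nd h2
  have hpos : (0:ℤ) < 3 * q.num - q.den := by omega
  have hcop : Nat.Coprime q.num.natAbs (3 * q.num - (q.den:ℤ)).natAbs := by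
    rw [Nat.Coprime, ← Int.gcd, ← Int.isCoprime_iff_gcd_eq_one]
    have hc : IsCoprime q.num ((q.den:ℤ)) := by
      rw [Int.isCoprime_iff_gcd_eq_one]
      have := q.reduced
      simpa [Int.gcd] using this
    have h7 := (hc.neg_right).add_mul_left_right 3
    have h8 : 3 * q.num - (q.den:ℤ) = -(q.den:ℤ) + q.num * 3 := by ring
    rw [h8]; exact h7
  have h3 : (0:ℚ) < 3 * q - 1 := by linarith
  have heq : fareySig q = (q.num : ℚ) / ((3 * q.num - (q.den:ℤ) : ℤ) : ℚ) := by
    have hd' : ((q.den:ℚ)) ≠ 0 := by positivity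
    have hnum : (q.num:ℚ) = q * (q.den:ℚ) := by
      exact (div_eq_iff hd').mp (Rat.num_div_den q)
    rw [fareySig, div_eq_div_iff (ne_of_gt h3) (by exact_mod_cast ne_of_gt hpos)]
    push_cast
    rw [hnum]; ring
  rw [heq]
  exact ⟨Rat.num_div_eq_of_coprime hpos hcop, Rat.den_div_eq_of_coprime hpos hcop⟩

lemma fareySig_lt {a b : ℚ} (ha : 1/2 ≤ a) (hab : a < b) (hb : b ≤ 1) :
    fareySig b < fareySig a := by
  have h3a : (0:ℚ) < 3 * a - 1 := by linarith
  have h3b : (0:ℚ) < 3 * b - 1 := by linarith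
  rw [fareySig, fareySig, div_lt_div_iff₀ h3b h3a]
  nlinarith

lemma fareySig_bounds {q : ℚ} (h1 : 1/2 ≤ q) (h2 : q ≤ 1) :
    1/2 ≤ fareySig q ∧ fareySig q ≤ 1 := by
  have h3 : (0:ℚ) < 3 * q - 1 := by linarith
  constructor
  · rw [fareySig, le_div_iff₀ h3]; linarith
  · rw [fareySig, div_le_one h3]; linarith

lemma fareySig_invol {q : ℚ} (h1 : 1/2 ≤ q) : fareySig (fareySig q) = q := by
  have h3 : (3 * q - 1) ≠ 0 := by intro h; rw [sub_eq_zero] at h; rw [← h] at h1; linarith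
  rw [fareySig, fareySig]
  have h4 : 3 * (q / (3 * q - 1)) - 1 = 1 / (3 * q - 1) := by field_simp; ring
  rw [h4]
  field_simp
  exact div_self (by intro h; apply h3; linarith)

lemma fareySig_memS {m : ℕ} {q : ℚ} (hq : q ∈ FareyB (2 * m) m)
    (h1 : 1/2 ≤ q) (h2 : q ≤ 1) : fareySig q ∈ FareyB (2 * m) m := by
  obtain ⟨-, -, hden, hnum, hdiff⟩ := hq
  obtain ⟨hn, hd⟩ := fareySig_spec h1 h2
  obtain ⟨hb1, hb2⟩ := fareySig_bounds h1 h2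
  have hk : (q.den:ℤ) ≤ 2 * q.num := half_le_nd h1
  have ha : q.num ≤ (q.den:ℤ) := le_one_nd h2
  refine ⟨by linarith, hb2, ?_, ?_, ?_⟩
  · have : ((fareySig q).den : ℤ) ≤ (2 * m : ℤ) := by rw [hd]; omega
    exact_mod_cast this
  · rw [hn]; exact hnum
  · rw [hd, hn]; omega

/-- Symmetry of numerators and denominators of `F(B(2m),m)` around the
fraction `2/3`: if `f₀ < f₁ < ⋯ < f_N` enumerates `F(B(2m),m)` in ascending
order, `f_s = 1/2` and `f_t = 2/3`, then for `0 ≤ v ≤ t - s` the fractions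
`f_{t+v}` and `f_{t-v}` have equal numerators, and the sum of their
denominators equals three times this common numerator. -/
theorem stmt_13 (m : ℕ) (hm : 1 < m) (N : ℕ) (f : ℕ → ℚ)
    (henum : ∀ q : ℚ, q ∈ FareyB (2 * m) m ↔ ∃ i ≤ N, f i = q)
    (hmono : ∀ i j : ℕ, i ≤ N → j ≤ N → i < j → f i < f j)
    (hf0 : f 0 = 0)
    (s t : ℕ) (hs : s ≤ N) (hfs : f s = 1 / 2) (ht : t ≤ N) (hft : f t = 2 / 3) :
    ∀ v : ℕ, v ≤ t - s →
      (f (t + v)).num = (f (t - v)).num ∧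
      ((f (t + v)).den : ℤ) + ((f (t - v)).den : ℤ) = 3 * (f (t + v)).num := by
  have hmemf : ∀ i, i ≤ N → f i ∈ FareyB (2 * m) m :=
    fun i hi => (henum (f i)).mpr ⟨i, hi, rfl⟩
  have hmono' : ∀ i j : ℕ, i ≤ N → j ≤ N → i ≤ j → f i ≤ f j := by
    intro i j hi hj hij
    rcases eq_or_lt_of_le hij with h | h
    · rw [h]
    · exact le_of_lt (hmono i j hi hj h)
  have hst : s < t := by
    by_contra h
    push_neg at h
    have := hmono' t s ht hs h
    rw [hfs, hft] at this
    norm_num at this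
  have h1S : (1:ℚ) ∈ FareyB (2 * m) m := by
    refine ⟨by norm_num, le_refl 1, ?_, ?_, ?_⟩ <;> simp <;> omega
  have hfN : f N = 1 := by
    obtain ⟨j, hj, hj1⟩ := (henum 1).mp h1S
    rcases eq_or_lt_of_le hj with h | h
    · rw [← h]; exact hj1
    · have h1 := hmono j N hj le_rfl h
      have h2 := (hmemf N le_rfl).2.1
      rw [hj1] at h1
      linarith
  have hbetween : ∀ i, i + 1 ≤ N → ∀ g ∈ FareyB (2 * m) m, ¬(f i < g ∧ g < f (i+1)) := by
    rintro i hi g hg ⟨h1, h2⟩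
    obtain ⟨k, hk, rfl⟩ := (henum g).mp hg
    rcases lt_or_ge k (i+1) with h | h
    · have : f k ≤ f i := hmono' k i (by omega) (by omega) (by omega)
      linarith
    · have : f (i+1) ≤ f k := hmono' (i+1) k hi hk h
      linarith
  have key : ∀ v : ℕ, v ≤ t - s → t + v ≤ N ∧ f (t + v) = fareySig (f (t - v)) := by
    intro v
    induction v with
    | zero =>
      intro _
      refine ⟨by omega, ?_⟩
      simp only [Nat.add_zero, Nat.sub_zero]
      rw [hft, fareySig]
      norm_num
    | succ v ih =>
      intro hv1
      obtain ⟨hleN, heq⟩ := ih (by omega)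
      have htv1N : t - (v+1) ≤ N := by omega
      have htvN : t - v ≤ N := by omega
      have hidx : t - (v+1) + 1 = t - v := by omega
      have hidx2 : t - (v+1) < t - v := by omega
      -- bounds on the left-side values
      have hontv1 : (1:ℚ)/2 ≤ f (t - (v+1)) := by
        have := hmono' s (t - (v+1)) hs htv1N (by omega)
        rw [hfs] at this; linarith
      have hlt : f (t - (v+1)) < f (t - v) := hmono _ _ htv1N htvN hidx2
      have hub : f (t - v) ≤ 1 := (hmemf _ htvN).2.1
      have hontv : (1:ℚ)/2 ≤ f (t - v) := by linarith
      have hstrict : (1:ℚ)/2 < f (t - v) := by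
        have := hmono s (t - v) hs htvN (by omega)
        rw [hfs] at this; linarith
      -- f (t+v) < 1, so t + v < N
      have hsig_half : fareySig (1/2) = 1 := by rw [fareySig]; norm_num
      have hlt1 : f (t + v) < 1 := by
        rw [heq, ← hsig_half]
        exact fareySig_lt (le_refl _) hstrict hub
      have hne : t + v ≠ N := by
        intro h; rw [h, hfN] at hlt1; exact lt_irrefl _ hlt1
      have hleN1 : t + v + 1 ≤ N := by omega
      -- the candidate successor
      set c := fareySig (f (t - (v+1))) with hc
      have htv1_mem := hmemf _ htv1N
      have hub1 : f (t - (v+1)) ≤ 1 := htv1_mem.2.1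
      have hcS : c ∈ FareyB (2 * m) m := fareySig_memS htv1_mem hontv1 hub1
      have hac : f (t + v) < c := by
        rw [heq, hc]
        exact fareySig_lt hontv1 hlt hub
      have htv_ge : (2:ℚ)/3 ≤ f (t + v) := by
        have := hmono' t (t + v) ht hleN (by omega)
        rw [hft] at this; linarith
      -- nothing in S strictly between f(t+v) and c
      have hnc : ∀ g ∈ FareyB (2 * m) m, ¬(f (t + v) < g ∧ g < c) := by
        rintro g hg ⟨hg1, hg2⟩
        have hg_half : (1:ℚ)/2 ≤ g := by linarith
        have hg_one : g ≤ 1 := hg.2.1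
        have hgS : fareySig g ∈ FareyB (2 * m) m := fareySig_memS hg hg_half hg_one
        have hcub : c ≤ 1 := hcS.2.1
        have h5 : fareySig g < f (t - v) := by
          have := fareySig_lt (by linarith : (1:ℚ)/2 ≤ f (t + v)) hg1 hg_one
          rw [heq, fareySig_invol hontv] at this
          exact this
        have h6 : f (t - (v+1)) < fareySig g := by
          have := fareySig_lt hg_half hg2 hcub
          rw [hc, fareySig_invol hontv1] at this
          exact this
        exact hbetween (t - (v+1)) (by omega) (fareySig g) hgS ⟨h6, by rwa [hidx]⟩
      -- f (t+v+1) = c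
      have hb_mem := hmemf (t + v + 1) hleN1
      have hab : f (t + v) < f (t + v + 1) := hmono _ _ (by omega) hleN1 (by omega)
      have hcb : f (t + v + 1) = c := by
        rcases lt_trichotomy (f (t + v + 1)) c with h | h | h
        · exact absurd ⟨hab, h⟩ (hnc _ hb_mem)
        · exact h
        · exact absurd ⟨hac, h⟩ (hbetween (t + v) hleN1 c hcS)
      refine ⟨by omega, ?_⟩
      have : t + (v + 1) = t + v + 1 := by omega
      rw [this, hcb]
  intro v hv
  obtain ⟨hleN, heq⟩ := key v hv
  have htvN : t - v ≤ N := by omega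
  have h1 : (1:ℚ)/2 ≤ f (t - v) := by
    have := hmono' s (t - v) hs htvN (by omega)
    rw [hfs] at this; linarith
  have h2 : f (t - v) ≤ 1 := (hmemf _ htvN).2.1
  obtain ⟨hn, hd⟩ := fareySig_spec h1 h2
  rw [heq]
  exact ⟨hn, by rw [hd, hn]; ring⟩
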